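/- Let G be the ordered geometric graph of ℝ² with vertices u₁ = (2,2), u₂ = (0,0), u₃ = (2,0), u₄ = (0,2), u₅ = (1,1) and edges (u₁,u₄), (u₁,u₅), (u₂,u₃), (u₂,u₅), and let H be the ordered geometric graph of ℝ² with vertices v₁ = (0,0), v₂ = (2,2), v₃ = (0,2), v₄ = (2,0), v₅ = (1,1) and edges (v₁,v₃), (v₁,v₅), (v₂,v₄), (v₂,v₅). Then for all cost coefficients C_V > 0, C_E > 0, GMD(G,H) = 0, although G and H are distinct geometric graphs (their edge sets, as sets of segments of ℝ², differ: for instance the segment from (0,0) to (2,0) is an edge of G but not of H). Hence the GMD does not satisfy the separability axiom and is only a pseudo-metric on ordered geometric graphs. -/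

import Mathlib

open scoped BigOperators

noncomputable section

/-- The `k`th entry of the adjacency-length row vector `E^G_i` of an ordered
geometric graph with vertex positions `u` and adjacency `adj`:
it is `|u_i - u_k|` if `(u_i, u_k)` is an edge, and `0` otherwise. -/
def edgeRow {d m : ℕ} (u : Fin m → EuclideanSpace ℝ (Fin d))
    (adj : Fin m → Fin m → Bool) (i k : Fin m) : ℝ :=
  if adj i k then dist (u i) (u k) else 0

/-- The ground distance matrix `d_{i,j}` of the graph mover's distance between
ordered geometric graphs `(u, adjG)` (with `m` vertices) and `(v, adjH)` (with
`n` vertices); indices `m+1` and `n+1` (here `Fin.last`) are the dummy supplier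
and dummy consumer. -/
def groundDist {d m n : ℕ} (u : Fin m → EuclideanSpace ℝ (Fin d))
    (adjG : Fin m → Fin m → Bool) (v : Fin n → EuclideanSpace ℝ (Fin d))
    (adjH : Fin n → Fin n → Bool) (CV CE : ℝ)
    (i : Fin (m + 1)) (j : Fin (n + 1)) : ℝ :=
  if hi : (i : ℕ) < m then
    if hj : (j : ℕ) < n then
      CV * dist (u ⟨i, hi⟩) (v ⟨j, hj⟩) +
        CE * ∑ k : Fin (min m n),
          |edgeRow u adjG ⟨i, hi⟩ (Fin.castLE (min_le_left m n) k) -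
            edgeRow v adjH ⟨j, hj⟩ (Fin.castLE (min_le_right m n) k)|
    else CE * ∑ k, |edgeRow u adjG ⟨i, hi⟩ k|
  else
    if hj : (j : ℕ) < n then CE * ∑ k, |edgeRow v adjH ⟨j, hj⟩ k|
    else 0

/-- A feasible flow for the GMD transportation problem between an ordered
geometric graph with `m` vertices and one with `n` vertices: all real vertices
have weight `1`, the dummy supplier has weight `n` and the dummy consumer has
weight `m`. -/
def IsFlow (m n : ℕ) (f : Fin (m + 1) → Fin (n + 1) → ℝ) : Prop :=
  (∀ i j, 0 ≤ f i j) ∧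
  (∀ i : Fin (m + 1), ∑ j, f i j = if (i : ℕ) < m then (1 : ℝ) else (n : ℝ)) ∧
  (∀ j : Fin (n + 1), ∑ i, f i j = if (j : ℕ) < n then (1 : ℝ) else (m : ℝ))

/-- The graph mover's distance between two ordered geometric graphs of `ℝ^d`:
the least total cost `∑ f_{i,j} d_{i,j}` over all feasible flows. -/
def GMD {d m n : ℕ} (u : Fin m → EuclideanSpace ℝ (Fin d))
    (adjG : Fin m → Fin m → Bool) (v : Fin n → EuclideanSpace ℝ (Fin d))
    (adjH : Fin n → Fin n → Bool) (CV CE : ℝ) : ℝ :=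
  sInf { c : ℝ | ∃ f, IsFlow m n f ∧
    c = ∑ i, ∑ j, f i j * groundDist u adjG v adjH CV CE i j }

/-- A point of the Euclidean plane `ℝ²`. -/
def pt (a b : ℝ) : EuclideanSpace ℝ (Fin 2) := WithLp.toLp 2 ![a, b]

/-- The vertex sequence `u₁ = (2,2), u₂ = (0,0), u₃ = (2,0), u₄ = (0,2),
u₅ = (1,1)` of the ordered geometric graph `G`. -/
def uG : Fin 5 → EuclideanSpace ℝ (Fin 2) := ![pt 2 2, pt 0 0, pt 2 0, pt 0 2, pt 1 1]

/-- The adjacency of `G`: edges `(u₁,u₄), (u₁,u₅), (u₂,u₃), (u₂,u₅)`. -/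
def adjG : Fin 5 → Fin 5 → Bool := fun i k =>
  decide (((i : ℕ), (k : ℕ)) ∈
    [(0, 3), (3, 0), (0, 4), (4, 0), (1, 2), (2, 1), (1, 4), (4, 1)])

/-- The vertex sequence `v₁ = (0,0), v₂ = (2,2), v₃ = (0,2), v₄ = (2,0),
v₅ = (1,1)` of the ordered geometric graph `H`. -/
def vH : Fin 5 → EuclideanSpace ℝ (Fin 2) := ![pt 0 0, pt 2 2, pt 0 2, pt 2 0, pt 1 1]

/-- The adjacency of `H`: edges `(v₁,v₃), (v₁,v₅), (v₂,v₄), (v₂,v₅)`. -/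
def adjH : Fin 5 → Fin 5 → Bool := fun i k =>
  decide (((i : ℕ), (k : ℕ)) ∈
    [(0, 2), (2, 0), (0, 4), (4, 0), (1, 3), (3, 1), (1, 4), (4, 1)])

section Aux

lemma dist_pt (a b c d : ℝ) : dist (pt a b) (pt c d) = Real.sqrt ((a-c)^2 + (b-d)^2) := by
  simp [pt, EuclideanSpace.dist_eq, Fin.sum_univ_two, Real.dist_eq, sq_abs]

lemma fv0 : ((0:Fin 6):ℕ) = 0 := rfl
lemma fv1 : ((1:Fin 6):ℕ) = 1 := rfl
lemma fv2 : ((2:Fin 6):ℕ) = 2 := rfl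
lemma fv3 : ((3:Fin 6):ℕ) = 3 := rfl
lemma fv4 : ((4:Fin 6):ℕ) = 4 := rfl
lemma fv5 : ((5:Fin 6):ℕ) = 5 := rfl

/-- The optimal (zero-cost) flow: match `u₁↦v₂, u₂↦v₁, u₃↦v₄, u₄↦v₃, u₅↦v₅`,
and send the dummy supplier's mass to the dummy consumer. -/
def f0 : Fin 6 → Fin 6 → ℝ := fun i j =>
  if ((i:ℕ),(j:ℕ)) ∈ [(0,1),(1,0),(2,3),(3,2),(4,4)] then 1
  else if (i:ℕ) = 5 ∧ (j:ℕ) = 5 then 5 else 0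

lemma sum6 (g : Fin (5+1) → ℝ) : ∑ j, g j = g 0 + g 1 + g 2 + g 3 + g 4 + g 5 :=
  Fin.sum_univ_six g

lemma f0_isFlow : IsFlow 5 5 f0 := by
  refine ⟨?_, ?_, ?_⟩
  · intro i j
    unfold f0; split_ifs <;> norm_num
  · intro i; rw [sum6]; fin_cases i <;>
      norm_num [f0, fv0, fv1, fv2, fv3, fv4, fv5]
  · intro j; rw [show (∑ i, f0 i j) = _ from sum6 (fun i => f0 i j)]; fin_cases j <;>
      norm_num [f0, fv0, fv1, fv2, fv3, fv4, fv5]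

lemma gd_eq_zero (CV CE : ℝ) (i j : Fin 6) (hi : (i:ℕ) < 5) (hj : (j:ℕ) < 5)
    (h1 : dist (uG ⟨i, hi⟩) (vH ⟨j, hj⟩) = 0)
    (h2 : ∀ k : Fin 5, edgeRow uG adjG ⟨i, hi⟩ k = edgeRow vH adjH ⟨j, hj⟩ k) :
    groundDist uG adjG vH adjH CV CE i j = 0 := by
  rw [groundDist, dif_pos hi, dif_pos hj, h1]
  have h3 : ∑ k : Fin (min 5 5),
      |edgeRow uG adjG ⟨i, hi⟩ (Fin.castLE (min_le_left 5 5) k) -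
        edgeRow vH adjH ⟨j, hj⟩ (Fin.castLE (min_le_right 5 5) k)| = 0 := by
    apply Finset.sum_eq_zero
    intro k _
    rw [h2]; simp
  rw [h3]; ring

lemma gd_nonneg (CV CE : ℝ) (hCV : 0 ≤ CV) (hCE : 0 ≤ CE) (i j : Fin 6) :
    0 ≤ groundDist uG adjG vH adjH CV CE i j := by
  rw [groundDist]
  split_ifs <;>
    first
    | rfl
    | positivity

lemma cost_f0 (CV CE : ℝ) :
    ∑ i, ∑ j, f0 i j * groundDist uG adjG vH adjH CV CE i j = 0 := by
  have key : ∀ i j, f0 i j * groundDist uG adjG vH adjH CV CE i j = 0 := by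
    intro i j
    by_cases hij : ((i:ℕ),(j:ℕ)) ∈ [(0,1),(1,0),(2,3),(3,2),(4,4)]
    · have hgd : groundDist uG adjG vH adjH CV CE i j = 0 := by
        simp only [List.mem_cons, List.mem_singleton, List.not_mem_nil, or_false,
          Prod.mk.injEq] at hij
        have hi : (i:ℕ) < 5 := by omega
        have hj : (j:ℕ) < 5 := by omega
        refine gd_eq_zero CV CE i j hi hj ?_ ?_
        · rcases hij with ⟨h1,h2⟩|⟨h1,h2⟩|⟨h1,h2⟩|⟨h1,h2⟩|⟨h1,h2⟩ <;>
            simp only [uG, vH] <;>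
            rw [show (⟨(i:ℕ), hi⟩ : Fin 5) = ⟨_, by omega⟩ from Fin.ext h1,
               show (⟨(j:ℕ), hj⟩ : Fin 5) = ⟨_, by omega⟩ from Fin.ext h2] <;>
            simp
        · intro k
          rcases hij with ⟨h1,h2⟩|⟨h1,h2⟩|⟨h1,h2⟩|⟨h1,h2⟩|⟨h1,h2⟩ <;>
            rw [show (⟨(i:ℕ), hi⟩ : Fin 5) = ⟨_, by omega⟩ from Fin.ext h1,
               show (⟨(j:ℕ), hj⟩ : Fin 5) = ⟨_, by omega⟩ from Fin.ext h2] <;>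
            fin_cases k <;>
            simp [edgeRow, adjG, adjH, uG, vH, dist_pt] <;> norm_num
      rw [hgd, mul_zero]
    · by_cases h55 : (i:ℕ) = 5 ∧ (j:ℕ) = 5
      · have : groundDist uG adjG vH adjH CV CE i j = 0 := by
          rw [groundDist, dif_neg (by omega), dif_neg (by omega)]
        rw [this, mul_zero]
      · have : f0 i j = 0 := by
          rw [f0, if_neg hij, if_neg h55]
        rw [this, zero_mul]
  simp [key]

end Aux

/-- For the two ordered geometric graphs `G` and `H` above and all cost
coefficients `C_V > 0`, `C_E > 0`, one has `GMD(G,H) = 0`, although `G` and `H`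
are distinct geometric graphs: the segment from `(0,0)` to `(2,0)` is an edge
segment of `G` but not of `H`.  Hence the GMD does not satisfy the
separability axiom and is only a pseudo-metric on ordered geometric graphs. -/
theorem gmd_not_separable (CV CE : ℝ) (hCV : 0 < CV) (hCE : 0 < CE) :
    GMD uG adjG vH adjH CV CE = 0 ∧
    (∃ i k, adjG i k = true ∧
      segment ℝ (uG i) (uG k) = segment ℝ (pt 0 0) (pt 2 0)) ∧
    ¬ (∃ i k, adjH i k = true ∧
      segment ℝ (vH i) (vH k) = segment ℝ (pt 0 0) (pt 2 0)) := by
  refine ⟨?_, ⟨1, 2, by decide, rfl⟩, ?_⟩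
  · have hmem : (0 : ℝ) ∈ { c : ℝ | ∃ f, IsFlow 5 5 f ∧
        c = ∑ i, ∑ j, f i j * groundDist uG adjG vH adjH CV CE i j } :=
      ⟨f0, f0_isFlow, (cost_f0 CV CE).symm⟩
    have hlb : ∀ c ∈ { c : ℝ | ∃ f, IsFlow 5 5 f ∧
        c = ∑ i, ∑ j, f i j * groundDist uG adjG vH adjH CV CE i j }, (0:ℝ) ≤ c := by
      rintro c ⟨f, hf, rfl⟩
      exact Finset.sum_nonneg fun i _ => Finset.sum_nonneg fun j _ =>
        mul_nonneg (hf.1 i j) (gd_nonneg CV CE hCV.le hCE.le i j)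
    exact le_antisymm (csInf_le ⟨0, hlb⟩ hmem) (le_csInf ⟨0, hmem⟩ hlb)
  · rintro ⟨i, k, hadj, hseg⟩
    have hmem : pt 1 0 ∈ segment ℝ (pt 0 0) (pt 2 0) := by
      refine ⟨1/2, 1/2, by norm_num, by norm_num, by norm_num, ?_⟩
      ext x; fin_cases x <;> norm_num [pt]
    rw [← hseg] at hmem
    obtain ⟨a, b, ha, hb, hab, h⟩ := hmem
    fin_cases i <;> fin_cases k <;>
      first
      | exact absurd hadj (by decide)
      | (have h0 := congrArg (· 0) h
         have h1 := congrArg (· 1) h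
         simp [vH, pt, Pi.add_apply, Pi.smul_apply, smul_eq_mul] at h0 h1
         try linarith)
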